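/- For every real number s, the determinant det( cosh(s·b) • (1 : E →ₗ[ℝ] E) − (sinh(s·b)/b) • A ) vanishes if and only if there exists a real eigenvalue λ of A with |λ| > b and s = Real.artanh (b/λ) / b. (In particular, eigenvalues λ with |λ| ≤ b contribute no real zero.) -/

import Mathlib

/-- The inverse hyperbolic tangent on `(-1, 1)` (not present in Mathlib),
`artanh x = (1/2) · log((1+x)/(1-x))`. -/
noncomputable def Real.artanhLogFormula (x : ℝ) : ℝ := (1 / 2) * Real.log ((1 + x) / (1 - x))

private lemma abs_sinh_lt_cosh (y : ℝ) : |Real.sinh y| < Real.cosh y := by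
  have h1 := Real.cosh_add_sinh y
  have h2 := Real.cosh_sub_sinh y
  have h3 := Real.exp_pos y
  have h4 := Real.exp_pos (-y)
  rw [abs_lt]
  constructor <;> linarith

private lemma tanh_eq_exp (y : ℝ) :
    Real.tanh y = (Real.exp (2 * y) - 1) / (Real.exp (2 * y) + 1) := by
  have h1 := Real.exp_pos y
  have h2 : Real.exp (2 * y) = Real.exp y * Real.exp y := by
    rw [← Real.exp_add]; ring_nf
  have hc : Real.cosh y ≠ 0 := (Real.cosh_pos y).ne'
  rw [Real.tanh_eq_sinh_div_cosh, Real.sinh_eq, Real.cosh_eq, Real.exp_neg, h2]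
  have hden : Real.exp y * Real.exp y + 1 ≠ 0 := by positivity
  field_simp

private lemma artanh_tanh (y : ℝ) : Real.artanhLogFormula (Real.tanh y) = y := by
  have hc := Real.cosh_pos y
  have h1 : 1 + Real.sinh y / Real.cosh y = Real.exp y / Real.cosh y := by
    rw [← Real.cosh_add_sinh y, add_div, div_self hc.ne']
  have h2 : 1 - Real.sinh y / Real.cosh y = Real.exp (-y) / Real.cosh y := by
    rw [← Real.cosh_sub_sinh y, sub_div, div_self hc.ne']
  have h3 : (Real.exp y / Real.cosh y) / (Real.exp (-y) / Real.cosh y)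
      = Real.exp (2 * y) := by
    have h4 := Real.exp_pos (-y)
    rw [div_div_div_cancel_right₀ hc.ne']
    rw [← Real.exp_sub]; ring_nf
  rw [Real.artanhLogFormula, Real.tanh_eq_sinh_div_cosh, h1, h2, h3, Real.log_exp]
  ring

private lemma tanh_artanh {x : ℝ} (hx : |x| < 1) : Real.tanh (Real.artanhLogFormula x) = x := by
  obtain ⟨h1, h2⟩ := abs_lt.mp hx
  have hx1 : (0:ℝ) < 1 + x := by linarith
  have hx2 : (0:ℝ) < 1 - x := by linarith
  have hu : 0 < (1 + x) / (1 - x) := div_pos hx1 hx2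
  have he : Real.exp (2 * Real.artanhLogFormula x) = (1 + x) / (1 - x) := by
    rw [Real.artanhLogFormula, show 2 * (1 / 2 * Real.log ((1 + x) / (1 - x)))
      = Real.log ((1 + x) / (1 - x)) by ring, Real.exp_log hu]
  rw [tanh_eq_exp, he]
  have hne : (1 + x) / (1 - x) + 1 ≠ 0 := by positivity
  field_simp at hne ⊢
  ring

private lemma det_eq_zero_iff_exists {E : Type*} [NormedAddCommGroup E]
    [InnerProductSpace ℝ E] [FiniteDimensional ℝ E] (f : E →ₗ[ℝ] E) :
    LinearMap.det f = 0 ↔ ∃ x : E, x ≠ 0 ∧ f x = 0 := by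
  constructor
  · intro h
    have hk := LinearMap.bot_lt_ker_of_det_eq_zero h
    obtain ⟨x, hx, hx0⟩ := Submodule.exists_mem_ne_zero_of_ne_bot hk.ne'
    exact ⟨x, hx0, LinearMap.mem_ker.mp hx⟩
  · rintro ⟨x, hx0, hfx⟩
    by_contra hdet
    have hinj : Function.Injective f := (f.equivOfDetNeZero hdet).injective
    have h0 : f x = f 0 := by simpa using hfx
    exact hx0 (hinj h0)

/-- Let `E` be a finite-dimensional real inner product space, `A` a self-adjoint
endomorphism of `E` and `b > 0`.  For every real number `s`, the determinant
`det(cosh(s·b) • id − (sinh(s·b)/b) • A)` vanishes if and only if there exists a real eigenvalue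
`λ` of `A` with `|λ| > b` and `s = artanh (b/λ) / b`. -/
theorem det_cosh_smul_sub_sinh_smul_eq_zero_iff
    {E : Type*} [NormedAddCommGroup E] [InnerProductSpace ℝ E] [FiniteDimensional ℝ E]
    (A : E →ₗ[ℝ] E) (hA : A.IsSymmetric) (b : ℝ) (hb : 0 < b) (s : ℝ) :
    LinearMap.det (Real.cosh (s * b) • (1 : E →ₗ[ℝ] E) - (Real.sinh (s * b) / b) • A) = 0 ↔
      ∃ l : ℝ, Module.End.HasEigenvalue A l ∧ b < |l| ∧ s = Real.artanhLogFormula (b / l) / b := by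
  have hbne : b ≠ 0 := hb.ne'
  by_cases hs : s = 0
  · subst hs
    simp only [zero_mul, Real.cosh_zero, Real.sinh_zero, zero_div, one_smul, zero_smul,
      sub_zero, map_one LinearMap.det]
    constructor
    · intro h; exact absurd h one_ne_zero
    · rintro ⟨l, hl, hbl, hsl⟩
      exfalso
      have hl0 : l ≠ 0 := fun h => by simp [h] at hbl; linarith [abs_nonneg l]
      have habs : |b / l| < 1 := by
        rw [abs_div, abs_of_pos hb, div_lt_one (lt_trans hb hbl)]
        exact hbl
      have h0 : Real.artanhLogFormula (b / l) = 0 := by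
        field_simp at hsl
        linarith [hsl]
      have : b / l = 0 := by
        rw [← tanh_artanh habs, h0, Real.tanh_zero]
      exact (div_ne_zero hbne hl0) this
  · have hsb : s * b ≠ 0 := mul_ne_zero hs hbne
    have hshne : Real.sinh (s * b) ≠ 0 := Real.sinh_ne_zero.mpr hsb
    have hcpos := Real.cosh_pos (s * b)
    have habs_sh : |Real.sinh (s * b)| < Real.cosh (s * b) := abs_sinh_lt_cosh (s * b)
    set c := Real.cosh (s * b) with hc
    set sh := Real.sinh (s * b) with hsh
    rw [det_eq_zero_iff_exists]
    constructor
    · rintro ⟨x, hx0, hx⟩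
      simp only [LinearMap.sub_apply, LinearMap.smul_apply, Module.End.one_apply] at hx
      set l := b * c / sh with hl
      have hAx : A x = l • x := by
        have h1 : (sh / b) • A x = c • x := by
          rw [sub_eq_zero] at hx; exact hx.symm
        have h2 : A x = (b / sh) • ((sh / b) • A x) := by
          rw [smul_smul]
          rw [show b / sh * (sh / b) = 1 by field_simp]
          rw [one_smul]
        rw [h2, h1, smul_smul, hl]
        congr 1
        field_simp
      refine ⟨l, Module.End.hasEigenvalue_of_hasEigenvector
        ⟨Module.End.mem_eigenspace_iff.mpr hAx, hx0⟩, ?_, ?_⟩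
      · rw [hl, abs_div, abs_mul, abs_of_pos hb, abs_of_pos hcpos,
          lt_div_iff₀ (abs_pos.mpr hshne)]
        have : |sh| < c := habs_sh
        nlinarith
      · have hbl : b / l = Real.tanh (s * b) := by
          rw [hl, Real.tanh_eq_sinh_div_cosh, ← hc, ← hsh]
          field_simp
        rw [hbl, artanh_tanh]
        field_simp
    · rintro ⟨l, hl, hbl, hsl⟩
      have hl0 : l ≠ 0 := fun h => by simp [h] at hbl; linarith [abs_nonneg l]
      have habs : |b / l| < 1 := by
        rw [abs_div, abs_of_pos hb, div_lt_one (lt_trans hb hbl)]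
        exact hbl
      have hsbeq : s * b = Real.artanhLogFormula (b / l) := by
        rw [hsl]; field_simp
      have htanh : sh / c = b / l := by
        rw [hsh, hc, ← Real.tanh_eq_sinh_div_cosh, hsbeq, tanh_artanh habs]
      obtain ⟨x, hx⟩ := hl.exists_hasEigenvector
      have hAx : A x = l • x := hx.apply_eq_smul
      refine ⟨x, hx.2, ?_⟩
      simp only [LinearMap.sub_apply, LinearMap.smul_apply, Module.End.one_apply, hAx,
        smul_smul]
      have : sh / b * l = c := by
        have h1 : sh * l = c * b := by
          field_simp at htanh
          linarith [htanh]
        field_simp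
        linarith [h1]
      rw [this, sub_self]
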